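/- The OPT-1 mechanism for the Egalitarian objective is strategy-proof: for every agent i, every true preference t_i ∈ {−1,0,1}, every vector t_{−i} of the other agents' declared preferences, and every misreport t_i′ ∈ {−1,0,1}, the utility of agent i (with his true preference) at the facility location output by OPT-1 on the truthful profile (t_i, t_{−i}) is greater than or equal to his utility at the location output by OPT-1 on the misreported profile (t_i′, t_{−i}). -/

import Mathlib

/-- The OPT-1 mechanism for the Egalitarian objective is strategy-proof. -/
theorem opt1_egalitarian_strategyproof
    (d n : ℕ) (x : Fin n → EuclideanSpace ℝ (Fin d))
    (S : Set (EuclideanSpace ℝ (Fin d))) (hS : S.Nonempty)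
    (g : Fin n → ℤ → ℝ → ℝ)
    (hgm : ∀ i : Fin n, StrictMonoOn (g i (-1)) (Set.Ici 0))
    (hg0 : ∀ i : Fin n, ∀ a ∈ Set.Ici (0:ℝ), ∀ b ∈ Set.Ici (0:ℝ), g i 0 a = g i 0 b)
    (hga : ∀ i : Fin n, StrictAntiOn (g i 1) (Set.Ici 0))
    -- a linear order ≼ on S
    (le : EuclideanSpace ℝ (Fin d) → EuclideanSpace ℝ (Fin d) → Prop)
    (hrefl : ∀ a ∈ S, le a a)
    (htrans : ∀ a ∈ S, ∀ b ∈ S, ∀ c ∈ S, le a b → le b c → le a c)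
    (hanti : ∀ a ∈ S, ∀ b ∈ S, le a b → le b a → a = b)
    (htotal : ∀ a ∈ S, ∀ b ∈ S, le a b ∨ le b a)
    -- the OPT-1 mechanism: on each declared profile it outputs the ≼-least optimizer
    (M : (Fin n → ℤ) → EuclideanSpace ℝ (Fin d))
    (hM : ∀ t : Fin n → ℤ, (∀ i, t i = -1 ∨ t i = 0 ∨ t i = 1) →
      ∀ hne : (Finset.univ.filter (fun i : Fin n => t i ≠ 0)).Nonempty,
        M t ∈ S ∧
        (∀ z ∈ S,
          (Finset.univ.filter (fun i : Fin n => t i ≠ 0)).inf' hne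
              (fun i => g i (t i) ‖x i - z‖) ≤
          (Finset.univ.filter (fun i : Fin n => t i ≠ 0)).inf' hne
              (fun i => g i (t i) ‖x i - M t‖)) ∧
        (∀ y ∈ S,
          (∀ z ∈ S,
            (Finset.univ.filter (fun i : Fin n => t i ≠ 0)).inf' hne
                (fun i => g i (t i) ‖x i - z‖) ≤
            (Finset.univ.filter (fun i : Fin n => t i ≠ 0)).inf' hne
                (fun i => g i (t i) ‖x i - y‖)) → le (M t) y))
    (hM0 : ∀ t : Fin n → ℤ, (∀ i, t i = 0) → M t ∈ S ∧ ∀ y ∈ S, le (M t) y) :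
    -- strategy-proofness
    ∀ (i : Fin n) (t : Fin n → ℤ), (∀ j, t j = -1 ∨ t j = 0 ∨ t j = 1) →
      ∀ t' : ℤ, (t' = -1 ∨ t' = 0 ∨ t' = 1) →
        g i (t i) ‖x i - M (Function.update t i t')‖ ≤ g i (t i) ‖x i - M t‖ := by
  intro i t ht t' ht'
  by_cases h0 : t i = 0
  · rw [h0]
    exact le_of_eq (hg0 i _ (Set.mem_Ici.mpr (norm_nonneg _)) _ (Set.mem_Ici.mpr (norm_nonneg _)))
  by_cases heq : t' = t i
  · rw [heq, Function.update_eq_self]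
  by_contra hcon
  push_neg at hcon
  set t'' := Function.update t i t' with ht''def
  have ht''i : t'' i = t' := by simp [ht''def]
  have ht''ne : ∀ j, j ≠ i → t'' j = t j := fun j hj => Function.update_of_ne hj t' t
  have ht'' : ∀ j, t'' j = -1 ∨ t'' j = 0 ∨ t'' j = 1 := by
    intro j
    by_cases hj : j = i
    · subst hj; rw [ht''i]; exact ht'
    · rw [ht''ne j hj]; exact ht j
  have hiF : i ∈ Finset.univ.filter (fun j : Fin n => t j ≠ 0) := by simp [h0]
  have hFne : (Finset.univ.filter (fun j : Fin n => t j ≠ 0)).Nonempty := ⟨i, hiF⟩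
  obtain ⟨hMtS, hMtopt, hMtmin⟩ := hM t ht hFne
  have hMt''S : M t'' ∈ S := by
    by_cases hne'' : (Finset.univ.filter (fun j : Fin n => t'' j ≠ 0)).Nonempty
    · exact (hM t'' ht'' hne'').1
    · refine (hM0 t'' ?_).1
      intro j
      by_contra hj
      exact hne'' ⟨j, by simp [hj]⟩
  -- abbreviations (statements kept explicit)
  have hWle : (Finset.univ.filter (fun j : Fin n => t j ≠ 0)).inf' hFne
      (fun k => g k (t k) ‖x k - M t''‖) ≤
      (Finset.univ.filter (fun j : Fin n => t j ≠ 0)).inf' hFne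
      (fun k => g k (t k) ‖x k - M t‖) := hMtopt _ hMt''S
  have hWui : (Finset.univ.filter (fun j : Fin n => t j ≠ 0)).inf' hFne
      (fun k => g k (t k) ‖x k - M t‖) ≤ g i (t i) ‖x i - M t‖ := Finset.inf'_le _ hiF
  obtain ⟨j, hjF, hjW⟩ := Finset.exists_mem_eq_inf' hFne (fun k => g k (t k) ‖x k - M t''‖)
  have hji : j ≠ i := by
    intro h
    subst h
    rw [hjW] at hWle
    exact absurd (le_trans hWle hWui) (not_le.mpr hcon)
  have hjA : j ∈ (Finset.univ.filter (fun j : Fin n => t j ≠ 0)).erase i :=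
    Finset.mem_erase.mpr ⟨hji, hjF⟩
  have hAne : ((Finset.univ.filter (fun j : Fin n => t j ≠ 0)).erase i).Nonempty := ⟨j, hjA⟩
  have hAmem : ∀ k ∈ (Finset.univ.filter (fun j : Fin n => t j ≠ 0)).erase i,
      k ≠ i ∧ t k ≠ 0 := by
    intro k hk
    obtain ⟨h1, h2⟩ := Finset.mem_erase.mp hk
    exact ⟨h1, by simpa using h2⟩
  have hAF'' : ∀ k ∈ (Finset.univ.filter (fun j : Fin n => t j ≠ 0)).erase i,
      k ∈ Finset.univ.filter (fun j : Fin n => t'' j ≠ 0) := by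
    intro k hk
    obtain ⟨h1, h2⟩ := hAmem k hk
    simp [ht''ne k h1, h2]
  have hne'' : (Finset.univ.filter (fun j : Fin n => t'' j ≠ 0)).Nonempty := ⟨j, hAF'' j hjA⟩
  obtain ⟨hMt''S', hMt''opt, hMt''min⟩ := hM t'' ht'' hne''
  -- mA(M t'') ≤ W(M t)
  have hmAle : ((Finset.univ.filter (fun j : Fin n => t j ≠ 0)).erase i).inf' hAne
      (fun k => g k (t k) ‖x k - M t''‖) ≤
      (Finset.univ.filter (fun j : Fin n => t j ≠ 0)).inf' hFne
      (fun k => g k (t k) ‖x k - M t‖) := by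
    have h1 : ((Finset.univ.filter (fun j : Fin n => t j ≠ 0)).erase i).inf' hAne
        (fun k => g k (t k) ‖x k - M t''‖) ≤ g j (t j) ‖x j - M t''‖ := Finset.inf'_le _ hjA
    rw [← hjW] at h1
    exact le_trans h1 hWle
  -- W(M t) ≤ mA(M t)
  have hWmA : (Finset.univ.filter (fun j : Fin n => t j ≠ 0)).inf' hFne
      (fun k => g k (t k) ‖x k - M t‖) ≤
      ((Finset.univ.filter (fun j : Fin n => t j ≠ 0)).erase i).inf' hAne
      (fun k => g k (t k) ‖x k - M t‖) :=
    Finset.le_inf' hAne _ (fun k hk => Finset.inf'_le _ (Finset.mem_of_mem_erase hk))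
  -- the flipped preference is strictly worse at M t''
  have hflip : t' ≠ 0 → g i t' ‖x i - M t''‖ < g i t' ‖x i - M t‖ := by
    intro ht'0
    have hm1 : (0:ℝ) ≤ ‖x i - M t‖ := norm_nonneg _
    have hm2 : (0:ℝ) ≤ ‖x i - M t''‖ := norm_nonneg _
    rcases ht i with h1 | h1 | h1
    · -- t i = -1, so t' = 1
      have h2 : t' = 1 := by
        rcases ht' with h | h | h
        · exact absurd (h.trans h1.symm) heq
        · exact absurd h ht'0
        · exact h
      rw [h1] at hcon
      have hd : ‖x i - M t‖ < ‖x i - M t''‖ :=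
        ((hgm i).lt_iff_lt (Set.mem_Ici.mpr hm1) (Set.mem_Ici.mpr hm2)).mp hcon
      rw [h2]
      exact (hga i) (Set.mem_Ici.mpr hm1) (Set.mem_Ici.mpr hm2) hd
    · exact absurd h1 h0
    · -- t i = 1, so t' = -1
      have h2 : t' = -1 := by
        rcases ht' with h | h | h
        · exact h
        · exact absurd h ht'0
        · exact absurd (h.trans h1.symm) heq
      rw [h1] at hcon
      have hd : ‖x i - M t''‖ < ‖x i - M t‖ :=
        ((hga i).lt_iff_gt (Set.mem_Ici.mpr hm1) (Set.mem_Ici.mpr hm2)).mp hcon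
      rw [h2]
      exact (hgm i) (Set.mem_Ici.mpr hm2) (Set.mem_Ici.mpr hm1) hd
  -- W''(M t'') ≤ mA(M t'')
  have hW''mA'' : (Finset.univ.filter (fun j : Fin n => t'' j ≠ 0)).inf' hne''
      (fun k => g k (t'' k) ‖x k - M t''‖) ≤
      ((Finset.univ.filter (fun j : Fin n => t j ≠ 0)).erase i).inf' hAne
      (fun k => g k (t k) ‖x k - M t''‖) := by
    refine Finset.le_inf' hAne _ (fun m hm => ?_)
    have h1 := Finset.inf'_le (fun k => g k (t'' k) ‖x k - M t''‖) (hAF'' m hm)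
    rwa [ht''ne m (hAmem m hm).1] at h1
  -- W''(M t'') ≤ W''(M t)
  have hW''le : (Finset.univ.filter (fun j : Fin n => t'' j ≠ 0)).inf' hne''
      (fun k => g k (t'' k) ‖x k - M t''‖) ≤
      (Finset.univ.filter (fun j : Fin n => t'' j ≠ 0)).inf' hne''
      (fun k => g k (t'' k) ‖x k - M t‖) := by
    refine Finset.le_inf' hne'' _ (fun k hk => ?_)
    by_cases hki : k = i
    · subst hki
      have ht'0 : t' ≠ 0 := by
        have := (Finset.mem_filter.mp hk).2
        rwa [ht''i] at this
      have h1 := Finset.inf'_le (fun m => g m (t'' m) ‖x m - M t''‖) hk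
      rw [ht''i] at h1 ⊢
      exact le_of_lt (lt_of_le_of_lt h1 (hflip ht'0))
    · have hkt : t k ≠ 0 := by
        have := (Finset.mem_filter.mp hk).2
        rwa [ht''ne k hki] at this
      have hkA : k ∈ (Finset.univ.filter (fun j : Fin n => t j ≠ 0)).erase i :=
        Finset.mem_erase.mpr ⟨hki, by simp [hkt]⟩
      rw [ht''ne k hki]
      exact le_trans hW''mA'' (le_trans hmAle (le_trans hWmA (Finset.inf'_le _ hkA)))
  -- mA(M t) ≤ W''(M t'')
  have hmAW'' : ((Finset.univ.filter (fun j : Fin n => t j ≠ 0)).erase i).inf' hAne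
      (fun k => g k (t k) ‖x k - M t‖) ≤
      (Finset.univ.filter (fun j : Fin n => t'' j ≠ 0)).inf' hne''
      (fun k => g k (t'' k) ‖x k - M t''‖) := by
    have hW''opt : (Finset.univ.filter (fun j : Fin n => t'' j ≠ 0)).inf' hne''
        (fun k => g k (t'' k) ‖x k - M t‖) ≤
        (Finset.univ.filter (fun j : Fin n => t'' j ≠ 0)).inf' hne''
        (fun k => g k (t'' k) ‖x k - M t''‖) := hMt''opt _ hMtS
    by_cases ht'0 : t' = 0
    · -- F'' ⊆ A : mA(M t) ≤ W''(M t)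
      refine le_trans (Finset.le_inf' hne'' _ (fun k hk => ?_)) hW''opt
      have hki : k ≠ i := by
        intro h
        subst h
        have := (Finset.mem_filter.mp hk).2
        rw [ht''i] at this
        exact this ht'0
      have hkt : t k ≠ 0 := by
        have := (Finset.mem_filter.mp hk).2
        rwa [ht''ne k hki] at this
      have hkA : k ∈ (Finset.univ.filter (fun j : Fin n => t j ≠ 0)).erase i :=
        Finset.mem_erase.mpr ⟨hki, by simp [hkt]⟩
      rw [ht''ne k hki]
      exact Finset.inf'_le _ hkA
    · -- t' ≠ 0 : the inf defining W''(M t) is attained off i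
      have hiF'' : i ∈ Finset.univ.filter (fun j : Fin n => t'' j ≠ 0) := by
        simp [ht''i, ht'0]
      have h2 : (Finset.univ.filter (fun j : Fin n => t'' j ≠ 0)).inf' hne''
          (fun k => g k (t'' k) ‖x k - M t''‖) ≤ g i t' ‖x i - M t''‖ := by
        have := Finset.inf'_le (fun k => g k (t'' k) ‖x k - M t''‖) hiF''
        rwa [ht''i] at this
      obtain ⟨k, hkF'', hkW⟩ := Finset.exists_mem_eq_inf' hne''
        (fun m => g m (t'' m) ‖x m - M t‖)
      have hki : k ≠ i := by
        intro h
        subst h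
        rw [ht''i] at hkW
        have := le_trans hW''opt h2
        rw [hkW] at this
        exact absurd (hflip ht'0) (not_lt.mpr this)
      have hkt : t k ≠ 0 := by
        have := (Finset.mem_filter.mp hkF'').2
        rwa [ht''ne k hki] at this
      have hkA : k ∈ (Finset.univ.filter (fun j : Fin n => t j ≠ 0)).erase i :=
        Finset.mem_erase.mpr ⟨hki, by simp [hkt]⟩
      have h3 : ((Finset.univ.filter (fun j : Fin n => t j ≠ 0)).erase i).inf' hAne
          (fun m => g m (t m) ‖x m - M t‖) ≤ g k (t k) ‖x k - M t‖ := Finset.inf'_le _ hkA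
      rw [← ht''ne k hki, ← hkW] at h3
      exact le_trans h3 hW''opt
  -- W(M t) ≤ W(M t'')
  have hWW : (Finset.univ.filter (fun j : Fin n => t j ≠ 0)).inf' hFne
      (fun k => g k (t k) ‖x k - M t‖) ≤
      (Finset.univ.filter (fun j : Fin n => t j ≠ 0)).inf' hFne
      (fun k => g k (t k) ‖x k - M t''‖) := by
    refine Finset.le_inf' hFne _ (fun k hk => ?_)
    by_cases hki : k = i
    · subst hki
      exact le_of_lt (lt_of_le_of_lt hWui hcon)
    · have hkA : k ∈ (Finset.univ.filter (fun j : Fin n => t j ≠ 0)).erase i :=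
        Finset.mem_erase.mpr ⟨hki, hk⟩
      exact le_trans hWmA (le_trans hmAW'' (le_trans hW''mA'' (Finset.inf'_le _ hkA)))
  -- M t is an optimizer of the misreported objective, M t'' of the true one
  have hle1 : le (M t'') (M t) :=
    hMt''min (M t) hMtS (fun z hz => le_trans (hMt''opt z hz) hW''le)
  have hle2 : le (M t) (M t'') :=
    hMtmin (M t'') hMt''S (fun z hz => le_trans (hMtopt z hz) hWW)
  have hMM : M t = M t'' := hanti _ hMtS _ hMt''S hle2 hle1
  rw [hMM] at hcon
  exact lt_irrefl _ hcon
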